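/- Let Ω ⊆ ℝ^N be a bounded measurable set, 0 < σ < 1, and u : ℝ^N → ℝ a σ-Hölder continuous function vanishing outside Ω, with Hölder seminorm |u|_σ. If u belongs to W^{σ,q} for some q > 1 (i.e. [u]_{σ,q} < ∞), then [u]_{σ,p} < ∞ for all p ≥ q and lim_{p→∞} [u]_{σ,p} = |u|_σ, where [u]_{σ,p} = (∫_{ℝ^N}∫_{ℝ^N} |u(x)-u(y)|^p/|x-y|^{N+σp} dx dy)^{1/p}. -/

import Mathlib

open Metric MeasureTheory Filter
open scoped ENNReal NNReal

lemma aux_rpow_tendsto_one (K : ℝ≥0∞) (h0 : K ≠ 0) (ht : K ≠ ⊤) :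
    Tendsto (fun p : ℝ => K ^ (1 / p)) atTop (nhds 1) := by
  have hK : (0:ℝ) < K.toReal := ENNReal.toReal_pos h0 ht
  have h1 : Tendsto (fun p : ℝ => 1 / p) atTop (nhds 0) := by
    simpa [one_div] using tendsto_inv_atTop_zero
  have hc : ContinuousAt (fun e : ℝ => K.toReal ^ e) 0 :=
    Real.continuousAt_const_rpow hK.ne'
  have h2 : Tendsto (fun p : ℝ => K.toReal ^ (1 / p)) atTop (nhds 1) := by
    have := (hc.tendsto).comp h1
    simpa [Function.comp_def, Real.rpow_zero] using this
  have h3 : Tendsto (fun p : ℝ => ENNReal.ofReal (K.toReal ^ (1 / p))) atTop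
      (nhds (ENNReal.ofReal 1)) := (ENNReal.continuous_ofReal.tendsto _).comp h2
  rw [ENNReal.ofReal_one] at h3
  refine h3.congr fun p => ?_
  rw [← ENNReal.ofReal_rpow_of_pos hK, ENNReal.ofReal_toReal ht]

theorem stmt_13 {N : ℕ} (Ω : Set (EuclideanSpace ℝ (Fin N)))
    (hΩm : MeasurableSet Ω) (hΩb : Bornology.IsBounded Ω)
    (σ : ℝ) (hσ0 : 0 < σ) (hσ1 : σ < 1)
    (u : EuclideanSpace ℝ (Fin N) → ℝ)
    (hu0 : ∀ x, x ∉ Ω → u x = 0)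
    (Hs : ℝ)
    (hHs : Hs = sSup {q : ℝ | ∃ x y, x ≠ y ∧ q = |u x - u y| / dist x y ^ σ})
    (hHolder : ∀ x y, |u x - u y| ≤ Hs * dist x y ^ σ)
    (q : ℝ) (hq : 1 < q)
    (hGq : (∫⁻ x, ∫⁻ y,
        ENNReal.ofReal (|u x - u y| ^ q / dist x y ^ ((N : ℝ) + σ * q))) < ⊤) :
    (∀ p : ℝ, q ≤ p → (∫⁻ x, ∫⁻ y,
        ENNReal.ofReal (|u x - u y| ^ p / dist x y ^ ((N : ℝ) + σ * p))) < ⊤) ∧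
    Tendsto (fun p : ℝ => (∫⁻ x, ∫⁻ y,
        ENNReal.ofReal (|u x - u y| ^ p / dist x y ^ ((N : ℝ) + σ * p))) ^ (1 / p))
      atTop (nhds (ENNReal.ofReal Hs)) := by
  classical
  set J : ℝ → ℝ≥0∞ := fun p => ∫⁻ x, ∫⁻ y,
    ENNReal.ofReal (|u x - u y| ^ p / dist x y ^ ((N : ℝ) + σ * p)) with hJ
  have hq0 : (0:ℝ) < q := by linarith
  by_cases hdeg : ∀ x y, u x = u y
  · -- degenerate case : u has no oscillation
    have hzero : ∀ p : ℝ, 0 < p → J p = 0 := by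
      intro p hp
      have h0 : ∀ x y : EuclideanSpace ℝ (Fin N),
          ENNReal.ofReal (|u x - u y| ^ p / dist x y ^ ((N : ℝ) + σ * p)) = 0 := by
        intro x y
        rw [hdeg x y, sub_self, abs_zero, Real.zero_rpow hp.ne', zero_div,
          ENNReal.ofReal_zero]
      simp only [hJ, h0, lintegral_zero]
    have hHs0 : Hs = 0 := by
      rcases Nat.eq_zero_or_pos N with hN | hN
      · subst hN
        have hempty : {q : ℝ | ∃ x y : EuclideanSpace ℝ (Fin 0), x ≠ y ∧
            q = |u x - u y| / dist x y ^ σ} = ∅ := by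
          ext r
          simp only [Set.mem_setOf_eq, Set.mem_empty_iff_false, iff_false, not_exists]
          rintro x y ⟨hxy, -⟩
          exact hxy (PiLp.ext fun i => Fin.elim0 i)
        rw [hHs, hempty, Real.sSup_empty]
      · have hsingle : {q : ℝ | ∃ x y, x ≠ y ∧ q = |u x - u y| / dist x y ^ σ} = {0} := by
          ext r
          simp only [Set.mem_setOf_eq, Set.mem_singleton_iff]
          constructor
          · rintro ⟨x, y, hxy, rfl⟩
            rw [hdeg x y, sub_self, abs_zero, zero_div]
          · rintro rfl
            refine ⟨0, EuclideanSpace.single ⟨0, hN⟩ 1, ?_, ?_⟩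
            · intro h
              have := congrArg (fun v => v ⟨0, hN⟩) h
              simp [EuclideanSpace.single_apply] at this
            · rw [hdeg 0 (EuclideanSpace.single ⟨0, hN⟩ 1), sub_self, abs_zero, zero_div]
        rw [hHs, hsingle, csSup_singleton]
    constructor
    · intro p hp
      show J p < ⊤
      rw [hzero p (by linarith)]
      exact ENNReal.zero_lt_top
    · rw [hHs0, ENNReal.ofReal_zero]
      refine Tendsto.congr' ?_ tendsto_const_nhds
      filter_upwards [eventually_gt_atTop (0:ℝ)] with p hp
      show (0:ℝ≥0∞) = J p ^ (1/p)
      rw [hzero p hp, ENNReal.zero_rpow_of_pos (by positivity)]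
  · -- main case
    push_neg at hdeg
    obtain ⟨xh, yh, hxyu⟩ := hdeg
    have hne : xh ≠ yh := fun h => hxyu (by rw [h])
    have hdist : (0:ℝ) < dist xh yh := dist_pos.2 hne
    have hHspos : (0:ℝ) < Hs := by
      have h1 := hHolder xh yh
      have h2 : (0:ℝ) < |u xh - u yh| := abs_pos.2 (sub_ne_zero.2 hxyu)
      nlinarith [Real.rpow_pos_of_pos hdist σ]
    -- the key comparison
    have key : ∀ p : ℝ, q ≤ p → J p ≤ ENNReal.ofReal (Hs ^ (p - q)) * J q := by
      intro p hpq
      have hp0 : (0:ℝ) < p := lt_of_lt_of_le hq0 hpq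
      have hpt : ∀ x y : EuclideanSpace ℝ (Fin N),
          ENNReal.ofReal (|u x - u y| ^ p / dist x y ^ ((N : ℝ) + σ * p)) ≤
          ENNReal.ofReal (Hs ^ (p - q)) *
            ENNReal.ofReal (|u x - u y| ^ q / dist x y ^ ((N : ℝ) + σ * q)) := by
        intro x y
        by_cases ha : |u x - u y| = 0
        · rw [ha, Real.zero_rpow hp0.ne', zero_div, ENNReal.ofReal_zero]
          exact zero_le
        · have hxy : x ≠ y := by
            intro h; exact ha (by rw [h, sub_self, abs_zero])
          have hd : (0:ℝ) < dist x y := dist_pos.2 hxy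
          have ha0 : (0:ℝ) < |u x - u y| := lt_of_le_of_ne (abs_nonneg _) (Ne.symm ha)
          have hrat : |u x - u y| / dist x y ^ σ ≤ Hs :=
            (div_le_iff₀ (Real.rpow_pos_of_pos hd σ)).2 (hHolder x y)
          have hrat2 : (|u x - u y| / dist x y ^ σ) ^ (p - q) ≤ Hs ^ (p - q) :=
            Real.rpow_le_rpow (by positivity) hrat (by linarith)
          have hkeyeq : |u x - u y| ^ p / dist x y ^ ((N:ℝ) + σ * p) =
              (|u x - u y| / dist x y ^ σ) ^ (p - q) *
                (|u x - u y| ^ q / dist x y ^ ((N:ℝ) + σ * q)) := by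
            have e1 : p - q + q = p := by ring
            have e2 : σ * (p - q) + ((N:ℝ) + σ * q) = (N:ℝ) + σ * p := by ring
            rw [Real.div_rpow ha0.le (Real.rpow_nonneg dist_nonneg σ),
              ← Real.rpow_mul dist_nonneg, div_mul_div_comm,
              ← Real.rpow_add ha0, ← Real.rpow_add hd, e1, e2]
          rw [hkeyeq, ENNReal.ofReal_mul (by positivity)]
          exact mul_le_mul_left (ENNReal.ofReal_le_ofReal hrat2) _
      calc J p ≤ ∫⁻ x, ∫⁻ y, ENNReal.ofReal (Hs ^ (p - q)) *
            ENNReal.ofReal (|u x - u y| ^ q / dist x y ^ ((N : ℝ) + σ * q)) :=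
          lintegral_mono fun x => lintegral_mono fun y => hpt x y
        _ = ENNReal.ofReal (Hs ^ (p - q)) * J q := by
          simp only [hJ]
          simp_rw [lintegral_const_mul' _ _ ENNReal.ofReal_ne_top]
    constructor
    · intro p hpq
      exact lt_of_le_of_lt (key p hpq)
        (ENNReal.mul_lt_top ENNReal.ofReal_lt_top hGq)
    · show Tendsto (fun p : ℝ => J p ^ (1 / p)) atTop (nhds (ENNReal.ofReal Hs))
      have hA : J q < ⊤ := hGq
      rw [tendsto_order]
      constructor
      · -- eventual lower bound
        intro b hb
        have hbt : b ≠ ⊤ := hb.ne_top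
        have hbr : b.toReal < Hs := by
          rw [← ENNReal.lt_ofReal_iff_toReal_lt hbt]; exact hb
        set c : ℝ := (b.toReal + Hs) / 2 with hc
        have hbtr : (0:ℝ) ≤ b.toReal := ENNReal.toReal_nonneg
        have hc0 : 0 < c := by rw [hc]; linarith
        have hcHs : c < Hs := by rw [hc]; linarith
        have hbc : b < ENNReal.ofReal c := by
          rw [ENNReal.lt_ofReal_iff_toReal_lt hbt]; linarith
        have hSne : Set.Nonempty
            {q : ℝ | ∃ x y, x ≠ y ∧ q = |u x - u y| / dist x y ^ σ} :=
          ⟨_, xh, yh, hne, rfl⟩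
        obtain ⟨r, hrS, hcr⟩ := exists_lt_of_lt_csSup hSne (by rw [← hHs]; exact hcHs)
        obtain ⟨x0, y0, hxy0, rfl⟩ := hrS
        have hd0 : (0:ℝ) < dist x0 y0 := dist_pos.2 hxy0
        have ha0 : c * dist x0 y0 ^ σ < |u x0 - u y0| :=
          (lt_div_iff₀ (Real.rpow_pos_of_pos hd0 σ)).1 hcr
        -- choose a small radius η
        have hgc : ContinuousAt (fun η : ℝ =>
            |u x0 - u y0| - 2 * Hs * η ^ σ - c * (dist x0 y0 + 2 * η) ^ σ) 0 := by
          have h1 : ContinuousAt (fun η : ℝ => η ^ σ) 0 :=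
            Real.continuousAt_rpow_const 0 σ (Or.inr hσ0.le)
          have h2 : ContinuousAt (fun η : ℝ => (dist x0 y0 + 2 * η) ^ σ) 0 := by
            apply ContinuousAt.rpow_const
            · exact (continuous_const.add (continuous_const.mul continuous_id)).continuousAt
            · right; exact hσ0.le
          exact (continuousAt_const.sub (continuousAt_const.mul h1)).sub
            (continuousAt_const.mul h2)
        have hg0 : 0 < |u x0 - u y0| - 2 * Hs * (0:ℝ) ^ σ - c * (dist x0 y0 + 2 * 0) ^ σ := by
          rw [Real.zero_rpow hσ0.ne']
          simp only [mul_zero, add_zero]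
          linarith
        have hev : ∀ᶠ η in nhdsWithin (0:ℝ) (Set.Ioi 0),
            ((0 < |u x0 - u y0| - 2 * Hs * η ^ σ - c * (dist x0 y0 + 2 * η) ^ σ ∧
              η < dist x0 y0 / 2) ∧ 0 < η) := by
          refine Filter.Eventually.and (Filter.Eventually.filter_mono nhdsWithin_le_nhds
            (Filter.Eventually.and ?_ ?_)) self_mem_nhdsWithin
          · exact hgc.eventually (eventually_gt_nhds hg0)
          · exact eventually_lt_nhds (by linarith : (0:ℝ) < dist x0 y0 / 2)
        obtain ⟨η, ⟨hgη, hηd⟩, hη0⟩ := hev.exists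
        set D := dist x0 y0 + 2 * η with hD
        have hDpos : 0 < D := by rw [hD]; positivity
        -- pointwise lower bound on the product of small balls
        have hpt : ∀ p : ℝ, 0 < p → ∀ x ∈ ball x0 η, ∀ y ∈ ball y0 η,
            ENNReal.ofReal (c ^ p * D ^ (-(N:ℝ))) ≤
            ENNReal.ofReal (|u x - u y| ^ p / dist x y ^ ((N : ℝ) + σ * p)) := by
          intro p hp x hx y hy
          have hxx0 : |u x - u x0| ≤ Hs * η ^ σ :=
            (hHolder x x0).trans (mul_le_mul_of_nonneg_left
              (Real.rpow_le_rpow dist_nonneg (mem_ball.1 hx).le hσ0.le) hHspos.le)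
          have hyy0 : |u y - u y0| ≤ Hs * η ^ σ :=
            (hHolder y y0).trans (mul_le_mul_of_nonneg_left
              (Real.rpow_le_rpow dist_nonneg (mem_ball.1 hy).le hσ0.le) hHspos.le)
          have htri : dist x y ≤ D := by
            have := dist_triangle4 x x0 y0 y
            have h5 : dist y0 y = dist y y0 := dist_comm _ _
            rw [hD]
            have hx' := (mem_ball.1 hx).le
            have hy' := (mem_ball.1 hy).le
            rw [h5] at this
            linarith
          have hdxy : 0 < dist x y := by
            have := dist_triangle4 x0 x y y0
            rw [dist_comm x0 x] at this
            have hx' := (mem_ball.1 hx).le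
            have hy' := (mem_ball.1 hy).le
            linarith
          have htr2 : |u x0 - u y0| ≤ |u x - u x0| + |u x - u y| + |u y - u y0| := by
            have e : u x0 - u y0 = -(u x - u x0) + (u x - u y) + (u y - u y0) := by ring
            calc |u x0 - u y0| = |(-(u x - u x0)) + (u x - u y) + (u y - u y0)| := by rw [← e]
              _ ≤ |(-(u x - u x0)) + (u x - u y)| + |u y - u y0| := abs_add_le _ _
              _ ≤ |(-(u x - u x0))| + |u x - u y| + |u y - u y0| := by
                  gcongr
                  exact abs_add_le _ _
              _ = |u x - u x0| + |u x - u y| + |u y - u y0| := by rw [abs_neg]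
          have hcD : c * D ^ σ ≤ |u x0 - u y0| - 2 * Hs * η ^ σ := by linarith
          have hulow : c * dist x y ^ σ ≤ |u x - u y| := by
            have t2 : c * dist x y ^ σ ≤ c * D ^ σ :=
              mul_le_mul_of_nonneg_left
                (Real.rpow_le_rpow dist_nonneg htri hσ0.le) hc0.le
            linarith
          apply ENNReal.ofReal_le_ofReal
          have m1 : (c * dist x y ^ σ) ^ p ≤ |u x - u y| ^ p :=
            Real.rpow_le_rpow (by positivity) hulow hp.le
          have m2 : (c * dist x y ^ σ) ^ p = c ^ p * dist x y ^ (σ * p) := by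
            rw [Real.mul_rpow hc0.le (Real.rpow_nonneg dist_nonneg σ),
              ← Real.rpow_mul dist_nonneg]
          have m3 : c ^ p * dist x y ^ (σ * p) / dist x y ^ ((N:ℝ) + σ * p)
              = c ^ p * dist x y ^ (-(N:ℝ)) := by
            rw [mul_div_assoc, ← Real.rpow_sub hdxy,
              show σ * p - ((N:ℝ) + σ * p) = -(N:ℝ) by ring]
          have m4 : D ^ (-(N:ℝ)) ≤ dist x y ^ (-(N:ℝ)) :=
            Real.rpow_le_rpow_of_nonpos hdxy htri (neg_nonpos.2 (Nat.cast_nonneg N))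
          calc c ^ p * D ^ (-(N:ℝ)) ≤ c ^ p * dist x y ^ (-(N:ℝ)) :=
                mul_le_mul_of_nonneg_left m4 (Real.rpow_nonneg hc0.le p)
            _ = c ^ p * dist x y ^ (σ * p) / dist x y ^ ((N:ℝ) + σ * p) := m3.symm
            _ = (c * dist x y ^ σ) ^ p / dist x y ^ ((N:ℝ) + σ * p) := by rw [m2]
            _ ≤ |u x - u y| ^ p / dist x y ^ ((N:ℝ) + σ * p) := by
                gcongr
        -- integral lower bound
        have hlow : ∀ p : ℝ, 0 < p →
            ENNReal.ofReal c ^ p * (ENNReal.ofReal (D ^ (-(N:ℝ))) *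
              (volume (ball y0 η) * volume (ball x0 η))) ≤ J p := by
          intro p hp
          have step : ∀ x ∈ ball x0 η,
              ENNReal.ofReal (c ^ p * D ^ (-(N:ℝ))) * volume (ball y0 η) ≤
              ∫⁻ y, ENNReal.ofReal (|u x - u y| ^ p / dist x y ^ ((N : ℝ) + σ * p)) := by
            intro x hx
            rw [← lintegral_indicator_const measurableSet_ball]
            refine lintegral_mono fun y => ?_
            by_cases hy : y ∈ ball y0 η
            · rw [Set.indicator_of_mem hy]
              exact hpt p hp x hx y hy
            · rw [Set.indicator_of_notMem hy]
              exact zero_le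
          calc ENNReal.ofReal c ^ p * (ENNReal.ofReal (D ^ (-(N:ℝ))) *
                (volume (ball y0 η) * volume (ball x0 η)))
              = (ENNReal.ofReal (c ^ p * D ^ (-(N:ℝ))) * volume (ball y0 η)) *
                  volume (ball x0 η) := by
                rw [ENNReal.ofReal_mul (by positivity), ENNReal.ofReal_rpow_of_pos hc0]
                ring
            _ ≤ J p := by
                rw [← lintegral_indicator_const measurableSet_ball]
                refine lintegral_mono fun x => ?_
                by_cases hx : x ∈ ball x0 η
                · rw [Set.indicator_of_mem hx]
                  exact step x hx
                · rw [Set.indicator_of_notMem hx]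
                  exact zero_le
        set κ := ENNReal.ofReal (D ^ (-(N:ℝ))) *
          (volume (ball y0 η) * volume (ball x0 η)) with hκ
        have hκ0 : κ ≠ 0 := by
          refine mul_ne_zero ?_ (mul_ne_zero ?_ ?_)
          · exact (ENNReal.ofReal_pos.2 (Real.rpow_pos_of_pos hDpos _)).ne'
          · exact (measure_ball_pos volume y0 hη0).ne'
          · exact (measure_ball_pos volume x0 hη0).ne'
        have hκt : κ ≠ ⊤ :=
          ENNReal.mul_ne_top ENNReal.ofReal_ne_top
            (ENNReal.mul_ne_top measure_ball_lt_top.ne measure_ball_lt_top.ne)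
        have hκlim : Tendsto (fun p : ℝ => κ ^ (1 / p)) atTop (nhds 1) :=
          aux_rpow_tendsto_one κ hκ0 hκt
        have hmul : Tendsto (fun p : ℝ => ENNReal.ofReal c * κ ^ (1 / p)) atTop
            (nhds (ENNReal.ofReal c)) := by
          have := ENNReal.Tendsto.const_mul (a := ENNReal.ofReal c) hκlim
            (Or.inl one_ne_zero)
          simpa using this
        filter_upwards [hmul.eventually (eventually_gt_nhds hbc),
          eventually_ge_atTop (1:ℝ)] with p hp1 hp2
        refine lt_of_lt_of_le hp1 ?_
        have hp0 : (0:ℝ) < p := lt_of_lt_of_le one_pos hp2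
        calc ENNReal.ofReal c * κ ^ (1/p) = (ENNReal.ofReal c ^ p * κ) ^ (1/p) := by
              rw [ENNReal.mul_rpow_of_nonneg (ENNReal.ofReal c ^ p) κ (by positivity : (0:ℝ) ≤ 1/p),
                ← ENNReal.rpow_mul, mul_one_div_cancel hp0.ne', ENNReal.rpow_one]
          _ ≤ J p ^ (1/p) := ENNReal.rpow_le_rpow (hlow p hp0) (by positivity)
      · -- eventual upper bound
        intro b hb
        have hAt : J q ≠ ⊤ := hA.ne
        by_cases hAz : J q = 0
        · have hb0 : (0:ℝ≥0∞) < b := lt_of_le_of_lt (zero_le) hb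
          filter_upwards [eventually_ge_atTop (max q 1)] with p hp
          have hpq : q ≤ p := le_trans (le_max_left _ _) hp
          have hp0 : (0:ℝ) < p := lt_of_lt_of_le (lt_of_lt_of_le one_pos (le_max_right q 1)) hp
          have hJ0 : J p = 0 := le_antisymm (by simpa [hAz] using key p hpq) (zero_le)
          rw [hJ0, ENNReal.zero_rpow_of_pos (by positivity)]
          exact hb0
        · have hbound : ∀ p : ℝ, q ≤ p → J p ^ (1/p) ≤
              ENNReal.ofReal (Hs ^ ((p - q) * (1/p))) * (J q) ^ (1/p) := by
            intro p hpq
            have hp0 : (0:ℝ) < p := lt_of_lt_of_le hq0 hpq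
            calc J p ^ (1/p) ≤ (ENNReal.ofReal (Hs ^ (p-q)) * J q) ^ (1/p) :=
                ENNReal.rpow_le_rpow (key p hpq) (by positivity)
              _ = _ := by
                rw [ENNReal.mul_rpow_of_nonneg _ _ (by positivity : (0:ℝ) ≤ 1/p),
                  ENNReal.ofReal_rpow_of_pos (Real.rpow_pos_of_pos hHspos _),
                  ← Real.rpow_mul hHspos.le]
          have hexp : Tendsto (fun p : ℝ => (p - q) * (1/p)) atTop (nhds 1) := by
            have h1 : Tendsto (fun p : ℝ => 1 - q * (1/p)) atTop (nhds 1) := by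
              have h2 : Tendsto (fun p : ℝ => q * (1/p)) atTop (nhds 0) := by
                have h3 : Tendsto (fun p : ℝ => 1 / p) atTop (nhds 0) := by
                  simpa [one_div] using tendsto_inv_atTop_zero
                simpa using h3.const_mul q
              simpa using (tendsto_const_nhds (x := (1:ℝ))).sub h2
            refine h1.congr' ?_
            filter_upwards [eventually_gt_atTop (0:ℝ)] with p hp
            field_simp
          have hHsl : Tendsto (fun p : ℝ => ENNReal.ofReal (Hs ^ ((p-q)*(1/p)))) atTop
              (nhds (ENNReal.ofReal Hs)) := by
            have hc : ContinuousAt (fun e : ℝ => Hs ^ e) 1 :=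
              Real.continuousAt_const_rpow hHspos.ne'
            have := (ENNReal.continuous_ofReal.tendsto _).comp ((hc.tendsto).comp hexp)
            simpa [Function.comp_def, Real.rpow_one] using this
          have hJl : Tendsto (fun p : ℝ => (J q) ^ (1/p)) atTop (nhds 1) :=
            aux_rpow_tendsto_one (J q) hAz hAt
          have hlim : Tendsto (fun p : ℝ => ENNReal.ofReal (Hs ^ ((p - q) * (1/p))) *
              (J q) ^ (1/p)) atTop (nhds (ENNReal.ofReal Hs)) := by
            have := ENNReal.Tendsto.mul hHsl (Or.inr ENNReal.one_ne_top)
              hJl (Or.inl one_ne_zero)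
            simpa using this
          filter_upwards [hlim.eventually (eventually_lt_nhds hb),
            eventually_ge_atTop q] with p h1 h2
          exact lt_of_le_of_lt (hbound p h2) h1
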